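/- Let U be a uniform and hollow right R-module, put M = U², U₁ = U × 0 and U₂ = 0 × U. If M is extending, then for any right R-module X, any homomorphism f : X → U₂ and any injective homomorphism g : X → U₁, one of the following holds: (i) there exists a homomorphism h : U₁ → U₂ such that f = h ∘ g; (ii) there exist a submodule N of U₁ containing the image of g and a surjective homomorphism h : N → U₂ such that f = h ∘ g. -/
import Mathlib


/-- A submodule `N` of `M` is *small* (superfluous) in `M` if `N + X ≠ M`
for every proper submodule `X` of `M`. -/
def IsSmallSubmodule {R M : Type*} [Ring R] [AddCommGroup M] [Module R M]
    (N : Submodule R M) : Prop :=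
  ∀ X : Submodule R M, X ≠ ⊤ → N ⊔ X ≠ ⊤

/-- A nonzero module `M` is *hollow* if every proper submodule of `M` is small in `M`. -/
def IsHollowModule (R M : Type*) [Ring R] [AddCommGroup M] [Module R M] : Prop :=
  Nontrivial M ∧ ∀ N : Submodule R M, N ≠ ⊤ → IsSmallSubmodule N

/-- A submodule `N` of `M` is *essential* in `M` if `N ∩ X ≠ 0`
for every nonzero submodule `X` of `M`. -/
def IsEssentialSubmodule {R M : Type*} [Ring R] [AddCommGroup M] [Module R M]
    (N : Submodule R M) : Prop :=
  ∀ X : Submodule R M, X ≠ ⊥ → N ⊓ X ≠ ⊥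

/-- A nonzero module `M` is *uniform* if every nonzero submodule of `M` is essential in `M`. -/
def IsUniformModule (R M : Type*) [Ring R] [AddCommGroup M] [Module R M] : Prop :=
  Nontrivial M ∧ ∀ N : Submodule R M, N ≠ ⊥ → IsEssentialSubmodule N

/-- `X` is a direct summand of `M`. -/
def IsDirectSummand {R M : Type*} [Ring R] [AddCommGroup M] [Module R M]
    (X : Submodule R M) : Prop :=
  ∃ Y : Submodule R M, IsCompl X Y

/-- A module `M` is *lifting* if for every submodule `N` of `M` there is a direct summand
`X` of `M` with `X ⊆ N` such that `N/X` is small in `M/X`. -/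
def IsLiftingModule (R M : Type*) [Ring R] [AddCommGroup M] [Module R M] : Prop :=
  ∀ N : Submodule R M, ∃ X : Submodule R M,
    X ≤ N ∧ IsDirectSummand X ∧ IsSmallSubmodule (N.map X.mkQ)

/-- A module `M` is *extending* if for every submodule `N` of `M` there is a direct summand
`X` of `M` such that `N` is essential in `X`. -/
def IsExtendingModule (R M : Type*) [Ring R] [AddCommGroup M] [Module R M] : Prop :=
  ∀ N : Submodule R M, ∃ X : Submodule R M,
    IsDirectSummand X ∧ N ≤ X ∧ ∀ Y : Submodule R M, Y ≤ X → Y ≠ ⊥ → N ⊓ Y ≠ ⊥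

/-- A module is *uniserial* if its submodules are linearly ordered by inclusion. -/
def IsUniserialModule (R M : Type*) [Ring R] [AddCommGroup M] [Module R M] : Prop :=
  ∀ A B : Submodule R M, A ≤ B ∨ B ≤ A

/-- An internal finite direct sum decomposition `M = ⨁ᵢ Fᵢ`. -/
def IsInternalDirectSum {R M ι : Type*} [Ring R] [AddCommGroup M] [Module R M]
    (F : ι → Submodule R M) : Prop :=
  (⨆ i, F i) = ⊤ ∧ ∀ i, Disjoint (F i) (⨆ j ∈ ({i}ᶜ : Set ι), F j)

/-- A module `M` satisfies the *finite internal exchange property* if for any direct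
summand `X` of `M` and any finite direct sum decomposition `M = M₁ ⊕ ⋯ ⊕ Mₙ` there are
submodules `Mᵢ' ⊆ Mᵢ` with `M = X ⊕ M₁' ⊕ ⋯ ⊕ Mₙ'`. -/
def SatisfiesFIEP (R M : Type*) [Ring R] [AddCommGroup M] [Module R M] : Prop :=
  ∀ (X : Submodule R M), IsDirectSummand X →
    ∀ (n : ℕ) (Mi : Fin n → Submodule R M), IsInternalDirectSum Mi →
      ∃ Mi' : Fin n → Submodule R M, (∀ i, Mi' i ≤ Mi i) ∧
        IsInternalDirectSum (fun o : Option (Fin n) => o.elim X Mi')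

/-- Let `U` be uniform and hollow, `M = U²`, `U₁ = U × 0`, `U₂ = 0 × U`. If `M` is
extending, then for any module `X`, any homomorphism `f : X → U₂` and any injective
homomorphism `g : X → U₁`, either (i) there is `h : U₁ → U₂` with `f = h ∘ g`, or
(ii) there are a submodule `N` of `U₁` containing the image of `g` and a surjective
homomorphism `h : N → U₂` with `f = h ∘ g`. -/
theorem stmt_7 {R U : Type*} [Ring R] [AddCommGroup U] [Module R U]
    (hU : IsUniformModule R U) (hH : IsHollowModule R U)
    (hext : IsExtendingModule R (U × U)) :
    ∀ (X : Type*) [AddCommGroup X] [Module R X]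
      (f : X →ₗ[R] ↥(Submodule.snd R U U)) (g : X →ₗ[R] ↥(Submodule.fst R U U)),
      Function.Injective g →
        (∃ h : ↥(Submodule.fst R U U) →ₗ[R] ↥(Submodule.snd R U U), f = h ∘ₗ g) ∨
        (∃ (N : Submodule R ↥(Submodule.fst R U U)) (hN : ∀ x, g x ∈ N)
            (h : ↥N →ₗ[R] ↥(Submodule.snd R U U)),
          Function.Surjective h ∧ f = h ∘ₗ LinearMap.codRestrict N g hN) := by
  intro X _ _ f g hg
  classical
  have memS1 : ∀ m : U × U, m ∈ (Submodule.fst R U U) ↔ m.2 = 0 := fun m => Submodule.mem_bot R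
  have memS2 : ∀ m : U × U, m ∈ (Submodule.snd R U U) ↔ m.1 = 0 := fun m => Submodule.mem_bot R
  set φ : X →ₗ[R] U × U := (Submodule.fst R U U).subtype.comp g + (Submodule.snd R U U).subtype.comp f with hφdef
  have hφ1 : ∀ x, (φ x).1 = (g x : U × U).1 := by
    intro x
    have h2 : ((f x : U × U)).1 = 0 := (memS2 _).1 (f x).2
    simp [hφdef, h2]
  have hφ2 : ∀ x, (φ x).2 = (f x : U × U).2 := by
    intro x
    have h2 : ((g x : U × U)).2 = 0 := (memS1 _).1 (g x).2
    simp [hφdef, h2]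
  obtain ⟨D, ⟨D', hcompl⟩, hWD, hess⟩ := hext (LinearMap.range φ)
  have hWmem : ∀ x, φ x ∈ D := fun x => hWD ⟨x, rfl⟩
  -- D ∩ (Submodule.snd R U U) = ⊥
  have hDS2 : D ⊓ (Submodule.snd R U U) = ⊥ := by
    by_contra hne
    apply hess (D ⊓ (Submodule.snd R U U)) inf_le_left hne
    rw [eq_bot_iff]
    rintro m ⟨⟨x, rfl⟩, _, hm2⟩
    have h1 : (φ x).1 = 0 := (memS2 _).1 hm2
    have hg1 : (g x : U × U).1 = 0 := by rw [← hφ1 x]; exact h1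
    have hg2 : (g x : U × U).2 = 0 := (memS1 _).1 (g x).2
    have : g x = 0 := Subtype.ext (Prod.ext hg1 hg2)
    have hx : x = 0 := hg (by rw [this, map_zero])
    simp [hx]
  set d : ↥D →ₗ[R] U := (LinearMap.fst R U U).comp D.subtype with hd
  set b : ↥D →ₗ[R] U := (LinearMap.snd R U U).comp D.subtype with hb
  have hdinj : Function.Injective d := by
    rw [← LinearMap.ker_eq_bot, eq_bot_iff]
    rintro ⟨m, hm⟩ hker
    have h1 : m.1 = 0 := hker
    have : m ∈ D ⊓ (Submodule.snd R U U) := ⟨hm, (memS2 m).2 h1⟩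
    rw [hDS2] at this
    exact Subtype.ext ((Submodule.mem_bot R).1 this)
  by_cases hD : D = ⊥
  · -- then f = 0
    left
    refine ⟨0, ?_⟩
    refine LinearMap.ext fun x => ?_
    have h0 : φ x = 0 := by
      have := hWmem x; rw [hD] at this; exact (Submodule.mem_bot R).1 this
    have h2 : (f x : U × U).2 = 0 := by rw [← hφ2 x, h0]; rfl
    have h1 : (f x : U × U).1 = 0 := (memS2 _).1 (f x).2
    simp only [LinearMap.comp_apply, LinearMap.zero_apply]
    refine Subtype.ext ?_
    show (f x : U × U) = ((0 : U), (0 : U))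
    exact Prod.ext h1 h2
  by_cases hsurj : Function.Surjective d
  · -- case (i)
    left
    set e : ↥D ≃ₗ[R] U := LinearEquiv.ofBijective d ⟨hdinj, hsurj⟩ with he
    refine ⟨(((Submodule.sndEquiv R U U).symm.toLinearMap.comp b).comp
        e.symm.toLinearMap).comp (Submodule.fstEquiv R U U).toLinearMap, ?_⟩
    refine LinearMap.ext fun x => ?_
    have hsymm : e.symm ((Submodule.fstEquiv R U U) (g x)) = ⟨φ x, hWmem x⟩ := by
      apply e.injective
      rw [LinearEquiv.apply_symm_apply]
      show (g x : U × U).1 = d ⟨φ x, hWmem x⟩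
      show (g x : U × U).1 = (φ x).1
      rw [hφ1]
    simp only [LinearMap.comp_apply, LinearEquiv.coe_coe, hsymm]
    show f x = (Submodule.sndEquiv R U U).symm ((φ x).2)
    rw [hφ2]
    exact ((Submodule.sndEquiv R U U).symm_apply_apply (f x)).symm
  · -- case (ii)
    right
    set A := LinearMap.range d with hA
    set B := LinearMap.range b with hB
    have hAne : A ≠ ⊤ := fun h => hsurj (LinearMap.range_eq_top.1 h)
    have hAsmall : IsSmallSubmodule A := hH.2 A hAne
    have hBtop : B = ⊤ := by
      by_contra hBne
      have hBsmall : IsSmallSubmodule B := hH.2 B hBne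
      -- prod A ⊥ ⊔ (prod ⊥ B ⊔ D') = ⊤
      set Z : Submodule R (U × U) := Submodule.prod ⊥ B ⊔ D' with hZ
      have hsup : Submodule.prod A ⊥ ⊔ Z = ⊤ := by
        rw [eq_top_iff]
        intro m _
        have hm : m ∈ D ⊔ D' := by rw [hcompl.sup_eq_top]; trivial
        obtain ⟨a, ha, c, hc, rfl⟩ := Submodule.mem_sup.mp hm
        have ha1 : (a.1, (0 : U)) ∈ Submodule.prod A ⊥ :=
          ⟨⟨⟨a, ha⟩, rfl⟩, Submodule.zero_mem ⊥⟩
        have ha2 : ((0 : U), a.2) ∈ Submodule.prod (⊥ : Submodule R U) B :=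
          ⟨Submodule.zero_mem ⊥, ⟨⟨a, ha⟩, rfl⟩⟩
        have : a + c = (a.1, (0 : U)) + (((0 : U), a.2) + c) := by
          ext <;> simp
        rw [this]
        exact Submodule.add_mem _ (Submodule.mem_sup_left ha1)
          (Submodule.mem_sup_right (Submodule.add_mem _ (Submodule.mem_sup_left ha2)
            (Submodule.mem_sup_right hc)))
      have hprodA_le : Submodule.prod A (⊥ : Submodule R U) ≤ (Submodule.fst R U U) := by
        rintro m ⟨-, hm2⟩
        exact (memS1 m).2 ((Submodule.mem_bot R).1 hm2)
      have hmod : Submodule.prod A (⊥ : Submodule R U) ⊔ (Z ⊓ (Submodule.fst R U U)) = (Submodule.fst R U U) := by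
        rw [← sup_inf_assoc_of_le Z hprodA_le, hsup, top_inf_eq]
      have hmap : A ⊔ (Z ⊓ (Submodule.fst R U U)).map (LinearMap.fst R U U) = ⊤ := by
        have := congrArg (Submodule.map (LinearMap.fst R U U)) hmod
        rwa [Submodule.map_sup, Submodule.prod_map_fst, Submodule.fst_map_fst] at this
      have htop : (Z ⊓ (Submodule.fst R U U)).map (LinearMap.fst R U U) = ⊤ := by
        by_contra hne
        exact hAsmall _ hne hmap
      have hS1Z : (Submodule.fst R U U) ≤ Z := by
        intro m hm
        have hm1 : m.1 ∈ (Z ⊓ (Submodule.fst R U U)).map (LinearMap.fst R U U) := by rw [htop]; trivial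
        obtain ⟨n, ⟨hnZ, hnS1⟩, hn1⟩ := hm1
        have : n = m := Prod.ext hn1 (((memS1 n).1 hnS1).trans ((memS1 m).1 hm).symm)
        rwa [← this]
      have hZtop : Z = ⊤ := by
        rw [eq_top_iff, ← hsup]
        exact sup_le (hprodA_le.trans hS1Z) le_rfl
      -- now repeat with (Submodule.snd R U U) and B
      have hprodB_le : Submodule.prod (⊥ : Submodule R U) B ≤ (Submodule.snd R U U) := by
        rintro m ⟨hm1, -⟩
        exact (memS2 m).2 ((Submodule.mem_bot R).1 hm1)
      have hmod2 : Submodule.prod (⊥ : Submodule R U) B ⊔ (D' ⊓ (Submodule.snd R U U)) = (Submodule.snd R U U) := by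
        rw [← sup_inf_assoc_of_le D' hprodB_le, ← hZ, hZtop, top_inf_eq]
      have hmap2 : B ⊔ (D' ⊓ (Submodule.snd R U U)).map (LinearMap.snd R U U) = ⊤ := by
        have := congrArg (Submodule.map (LinearMap.snd R U U)) hmod2
        rwa [Submodule.map_sup, Submodule.prod_map_snd, Submodule.snd_map_snd] at this
      have htop2 : (D' ⊓ (Submodule.snd R U U)).map (LinearMap.snd R U U) = ⊤ := by
        by_contra hne
        exact hBsmall _ hne hmap2
      have hS2D' : (Submodule.snd R U U) ≤ D' := by
        intro m hm
        have hm2 : m.2 ∈ (D' ⊓ (Submodule.snd R U U)).map (LinearMap.snd R U U) := by rw [htop2]; trivial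
        obtain ⟨n, ⟨hnD', hnS2⟩, hn2⟩ := hm2
        have : n = m := Prod.ext (((memS2 n).1 hnS2).trans ((memS2 m).1 hm).symm) hn2
        rwa [← this]
      have hD'top : D' = ⊤ := by
        rw [eq_top_iff, ← hZtop]
        exact sup_le (hprodB_le.trans hS2D') le_rfl
      apply hD
      have := hcompl.disjoint.eq_bot
      rw [hD'top, inf_top_eq] at this
      exact this
    have hbsurj : Function.Surjective b := LinearMap.range_eq_top.1 hBtop
    set d₁ : ↥D →ₗ[R] ↥(Submodule.fst R U U) := (Submodule.fstEquiv R U U).symm.toLinearMap.comp d with hd₁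
    have hd₁gx : ∀ x : X, d₁ ⟨φ x, hWmem x⟩ = g x := by
      intro x
      show (Submodule.fstEquiv R U U).symm ((φ x).1) = g x
      rw [hφ1]
      exact (Submodule.fstEquiv R U U).symm_apply_apply (g x)
    have hd₁inj : Function.Injective d₁ :=
      (Submodule.fstEquiv R U U).symm.injective.comp hdinj
    refine ⟨LinearMap.range d₁, fun x => by rw [← hd₁gx x]; exact ⟨_, rfl⟩, ?_⟩
    set e' : ↥D ≃ₗ[R] ↥(LinearMap.range d₁) := LinearEquiv.ofInjective d₁ hd₁inj with he'
    refine ⟨((Submodule.sndEquiv R U U).symm.toLinearMap.comp b).comp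
        e'.symm.toLinearMap, ?_, ?_⟩
    · exact ((Submodule.sndEquiv R U U).symm.surjective.comp hbsurj).comp
        e'.symm.surjective
    · refine LinearMap.ext fun x => ?_
      have hsymm : e'.symm (LinearMap.codRestrict (LinearMap.range d₁) g
          (fun x => by rw [← hd₁gx x]; exact ⟨_, rfl⟩) x) = ⟨φ x, hWmem x⟩ := by
        apply e'.injective
        rw [LinearEquiv.apply_symm_apply]
        apply Subtype.ext
        show (g x : ↥(Submodule.fst R U U)) = (e' ⟨φ x, hWmem x⟩ : ↥(LinearMap.range d₁))
        rw [he']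
        erw [LinearEquiv.ofInjective_apply]
        exact (hd₁gx x).symm
      simp only [LinearMap.comp_apply, LinearEquiv.coe_coe, hsymm]
      show f x = (Submodule.sndEquiv R U U).symm ((φ x).2)
      rw [hφ2]
      exact ((Submodule.sndEquiv R U U).symm_apply_apply (f x)).symm
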